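/- Let r ≥ 3 and let λ = (λ_1,…,λ_r) ∈ ℝ^r satisfy λ_1 > λ_2 > … > λ_{r−1} > |λ_r|. Then the type D BZ-polytope BZ_λ has nonempty topological interior in ℝ^{r(r−1)}; equivalently, its affine dimension equals r(r−1). -/

import Mathlib

open scoped BigOperators

noncomputable section

/-- 1-based standard basis vector `e i` of `ℝ^r`. -/
def stdVec (r i : ℕ) : Fin r → ℝ := fun k => if (k : ℕ) + 1 = i then 1 else 0

/-- Type B/C BZ inequalities. -/
def IsBZBC (r : ℕ) (x y : ℕ → ℕ → ℝ) : Prop :=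
  (∀ i j, 1 ≤ i → i ≤ j → j ≤ r → y i j ≤ x i j) ∧
  (∀ i j, 1 ≤ i → i < j → j ≤ r → y i j ≤ x (i + 1) j) ∧
  (∀ i j, 1 ≤ i → i ≤ j → j + 1 ≤ r → x i (j + 1) ≤ y i j ∧ x (i + 1) (j + 1) ≤ y i j) ∧
  (∀ i, 1 ≤ i → i ≤ r → 0 ≤ y i r)

def BZsetBC (r : ℕ) (lam : ℕ → ℝ) : Set ((ℕ → ℕ → ℝ) × (ℕ → ℕ → ℝ)) :=
  {p | (∀ j, 1 ≤ j → j ≤ r → p.1 1 j = lam j) ∧ IsBZBC r p.1 p.2 ∧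
       (∀ i j, ¬(1 ≤ i ∧ i ≤ j ∧ j ≤ r) → p.1 i j = 0) ∧
       (∀ i j, ¬(1 ≤ i ∧ i ≤ j ∧ j ≤ r) → p.2 i j = 0)}

def wtBC (r : ℕ) (p : (ℕ → ℕ → ℝ) × (ℕ → ℕ → ℝ)) (i : ℕ) : ℝ :=
  (∑ j ∈ Finset.Icc i r, p.1 i j) + (∑ j ∈ Finset.Icc (i + 1) r, p.1 (i + 1) j)
    - 2 * ∑ j ∈ Finset.Icc i r, p.2 i j

def IsBZD (r : ℕ) (x y : ℕ → ℕ → ℝ) : Prop :=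
  (∀ i j, 1 ≤ i → i ≤ j → j + 1 ≤ r → y i j ≤ x i j) ∧
  (∀ i j, 1 ≤ i → i < j → j + 1 ≤ r → y i j ≤ x (i + 1) j) ∧
  (∀ i j, 1 ≤ i → i ≤ j → j + 1 ≤ r → x i (j + 1) ≤ y i j ∧ x (i + 1) (j + 1) ≤ y i j) ∧
  (∀ i, 1 ≤ i → i + 2 ≤ r → y i (r - 1) ≤ x i r + x (i + 1) r + min (x i (r - 1)) (x (i + 1) (r - 1))) ∧
  (y (r - 1) (r - 1) ≤ x (r - 1) r + x r r + x (r - 1) (r - 1))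

def BZsetD (r : ℕ) (lam : ℕ → ℝ) : Set ((ℕ → ℕ → ℝ) × (ℕ → ℕ → ℝ)) :=
  {p | (∀ j, 1 ≤ j → j ≤ r → p.1 1 j = lam j) ∧ IsBZD r p.1 p.2 ∧
       (∀ i j, ¬(1 ≤ i ∧ i ≤ j ∧ j ≤ r) → p.1 i j = 0) ∧
       (∀ i j, ¬(1 ≤ i ∧ i ≤ j ∧ j + 1 ≤ r) → p.2 i j = 0)}

def wtD (r : ℕ) (p : (ℕ → ℕ → ℝ) × (ℕ → ℕ → ℝ)) (i : ℕ) : ℝ :=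
  (∑ j ∈ Finset.Icc i r, p.1 i j) + (∑ j ∈ Finset.Icc (i + 1) r, p.1 (i + 1) j)
    - 2 * ∑ j ∈ Finset.Icc i (r - 1), p.2 i j

/-- Affine dimension of a subset of a real vector space. -/
def affDim {V : Type*} [AddCommGroup V] [Module ℝ V] (A : Set V) : ℕ :=
  Module.finrank ℝ (vectorSpan ℝ A)

def simpleRootB (r i : ℕ) : Fin r → ℝ :=
  if i = r then stdVec r r else stdVec r i - stdVec r (i + 1)

def simpleRootC (r i : ℕ) : Fin r → ℝ :=
  if i = r then (2 : ℝ) • stdVec r r else stdVec r i - stdVec r (i + 1)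

def simpleRootD (r i : ℕ) : Fin r → ℝ :=
  if i = r then stdVec r (r - 1) + stdVec r r else stdVec r i - stdVec r (i + 1)

def posRootsB (r : ℕ) : Set (Fin r → ℝ) :=
  {v | ∃ i j, 1 ≤ i ∧ i < j ∧ j ≤ r ∧ (v = stdVec r i - stdVec r j ∨ v = stdVec r i + stdVec r j)}
    ∪ {v | ∃ i, 1 ≤ i ∧ i ≤ r ∧ v = stdVec r i}

def posRootsC (r : ℕ) : Set (Fin r → ℝ) :=
  {v | ∃ i j, 1 ≤ i ∧ i < j ∧ j ≤ r ∧ (v = stdVec r i - stdVec r j ∨ v = stdVec r i + stdVec r j)}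
    ∪ {v | ∃ i, 1 ≤ i ∧ i ≤ r ∧ v = (2 : ℝ) • stdVec r i}

def posRootsD (r : ℕ) : Set (Fin r → ℝ) :=
  {v | ∃ i j, 1 ≤ i ∧ i < j ∧ j ≤ r ∧ (v = stdVec r i - stdVec r j ∨ v = stdVec r i + stdVec r j)}

/-- `f` is a quasi-polynomial of degree exactly `d` on positive integers. -/
def IsQuasiPolyOfDegree (f : ℕ → ℕ) (d : ℕ) : Prop :=
  ∃ T : ℕ, 0 < T ∧ ∃ P : ℕ → Polynomial ℚ,
    (∀ k < T, (P k).degree = (d : ℕ)) ∧ ∀ N : ℕ, 0 < N → (f N : ℚ) = (P (N % T)).eval (N : ℚ)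

end

noncomputable section BZAuxSec

open Finset

namespace BZAux

/-- Index set for the free `x`-coordinates: sigma pairs `⟨j, i⟩` with `2 ≤ i ≤ j ≤ r`. -/
def Sx (r : ℕ) : Finset ((_ : ℕ) × ℕ) := (Finset.Icc 1 r).sigma fun j => Finset.Icc 2 j

/-- Index set for the free `y`-coordinates: sigma pairs `⟨j, i⟩` with `1 ≤ i ≤ j ≤ r-1`. -/
def Sy (r : ℕ) : Finset ((_ : ℕ) × ℕ) := (Finset.Icc 1 (r - 1)).sigma fun j => Finset.Icc 1 j

lemma mem_Sx {r i j : ℕ} : (⟨j, i⟩ : (_ : ℕ) × ℕ) ∈ Sx r ↔ 2 ≤ i ∧ i ≤ j ∧ j ≤ r := by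
  simp only [Sx, Finset.mem_sigma, Finset.mem_Icc]
  omega

lemma mem_Sy {r i j : ℕ} : (⟨j, i⟩ : (_ : ℕ) × ℕ) ∈ Sy r ↔ 1 ≤ i ∧ i ≤ j ∧ j ≤ r - 1 := by
  simp only [Sy, Finset.mem_sigma, Finset.mem_Icc]
  omega

/-- coordinate vector in the `x` component -/
def ex (i j : ℕ) : (ℕ → ℕ → ℝ) × (ℕ → ℕ → ℝ) :=
  (fun a b => if a = i ∧ b = j then 1 else 0, fun _ _ => 0)

/-- coordinate vector in the `y` component -/
def ey (i j : ℕ) : (ℕ → ℕ → ℝ) × (ℕ → ℕ → ℝ) :=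
  (fun _ _ => 0, fun a b => if a = i ∧ b = j then 1 else 0)

/-- The candidate for the vector span: pairs supported on the free coordinates. -/
def W (r : ℕ) : Submodule ℝ ((ℕ → ℕ → ℝ) × (ℕ → ℕ → ℝ)) where
  carrier := {v | (∀ i j, ¬(2 ≤ i ∧ i ≤ j ∧ j ≤ r) → v.1 i j = 0) ∧
                  (∀ i j, ¬(1 ≤ i ∧ i ≤ j ∧ j ≤ r - 1) → v.2 i j = 0)}
  add_mem' := by
    rintro a b ⟨ha1, ha2⟩ ⟨hb1, hb2⟩
    exact ⟨fun i j h => by simp [ha1 i j h, hb1 i j h],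
           fun i j h => by simp [ha2 i j h, hb2 i j h]⟩
  zero_mem' := ⟨fun _ _ _ => rfl, fun _ _ _ => rfl⟩
  smul_mem' := by
    rintro c a ⟨h1, h2⟩
    exact ⟨fun i j h => by simp [h1 i j h], fun i j h => by simp [h2 i j h]⟩

lemma mem_W {r : ℕ} {v : (ℕ → ℕ → ℝ) × (ℕ → ℕ → ℝ)} :
    v ∈ W r ↔ (∀ i j, ¬(2 ≤ i ∧ i ≤ j ∧ j ≤ r) → v.1 i j = 0) ∧
      (∀ i j, ¬(1 ≤ i ∧ i ≤ j ∧ j ≤ r - 1) → v.2 i j = 0) := Iff.rfl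

/-- linear equivalence of `W r` with a finite-dimensional coordinate space -/
def phi (r : ℕ) : ((↥(Sx r) → ℝ) × (↥(Sy r) → ℝ)) ≃ₗ[ℝ] ↥(W r) where
  toFun f := ⟨(fun i j => if h : (⟨j, i⟩ : (_ : ℕ) × ℕ) ∈ Sx r then f.1 ⟨⟨j, i⟩, h⟩ else 0,
               fun i j => if h : (⟨j, i⟩ : (_ : ℕ) × ℕ) ∈ Sy r then f.2 ⟨⟨j, i⟩, h⟩ else 0),
              ⟨fun i j h => dif_neg (by rw [mem_Sx]; exact h),
               fun i j h => dif_neg (by rw [mem_Sy]; exact h)⟩⟩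
  map_add' f g := by
    apply Subtype.ext
    refine Prod.ext ?_ ?_ <;> funext i j
    · by_cases h : (⟨j, i⟩ : (_ : ℕ) × ℕ) ∈ Sx r <;> simp [h]
    · by_cases h : (⟨j, i⟩ : (_ : ℕ) × ℕ) ∈ Sy r <;> simp [h]
  map_smul' c f := by
    apply Subtype.ext
    refine Prod.ext ?_ ?_ <;> funext i j
    · by_cases h : (⟨j, i⟩ : (_ : ℕ) × ℕ) ∈ Sx r <;> simp [h]
    · by_cases h : (⟨j, i⟩ : (_ : ℕ) × ℕ) ∈ Sy r <;> simp [h]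
  invFun v := (fun c => (v : (ℕ → ℕ → ℝ) × (ℕ → ℕ → ℝ)).1 c.1.2 c.1.1,
               fun c => (v : (ℕ → ℕ → ℝ) × (ℕ → ℕ → ℝ)).2 c.1.2 c.1.1)
  left_inv f := by
    refine Prod.ext ?_ ?_ <;> funext c
    · exact dif_pos c.2
    · exact dif_pos c.2
  right_inv v := by
    apply Subtype.ext
    refine Prod.ext ?_ ?_ <;> funext i j <;> dsimp only
    · by_cases h : (⟨j, i⟩ : (_ : ℕ) × ℕ) ∈ Sx r
      · exact dif_pos h
      · rw [dif_neg h]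
        exact (v.2.1 i j (by rwa [mem_Sx] at h)).symm
    · by_cases h : (⟨j, i⟩ : (_ : ℕ) × ℕ) ∈ Sy r
      · exact dif_pos h
      · rw [dif_neg h]
        exact (v.2.2 i j (by rwa [mem_Sy] at h)).symm

instance (r : ℕ) : FiniteDimensional ℝ ↥(W r) :=
  Module.Finite.equiv (phi r)

lemma gauss_sum (n : ℕ) :
    ((∑ j ∈ Finset.Icc 1 (n + 1), (j - 1)) + ∑ j ∈ Finset.Icc 1 n, j) = (n + 1) * n := by
  induction n with
  | zero => simp
  | succ m ih =>
      rw [Finset.sum_Icc_succ_top (f := fun j => j - 1) (by omega : 1 ≤ m + 1 + 1),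
        Finset.sum_Icc_succ_top (f := fun j => j) (by omega : 1 ≤ m + 1)]
      have h : (m + 1 + 1) * (m + 1) = (m + 1) * m + 2 * (m + 1) := by ring
      rw [h, ← ih]
      omega

lemma card_Sx (r : ℕ) : (Sx r).card = ∑ j ∈ Finset.Icc 1 r, (j - 1) := by
  rw [Sx, Finset.card_sigma]
  exact Finset.sum_congr rfl fun j _ => by rw [Nat.card_Icc]; omega

lemma card_Sy (r : ℕ) : (Sy r).card = ∑ j ∈ Finset.Icc 1 (r - 1), j := by
  rw [Sy, Finset.card_sigma]
  exact Finset.sum_congr rfl fun j _ => by rw [Nat.card_Icc]; omega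

lemma card_sum (r : ℕ) (hr : 3 ≤ r) : (Sx r).card + (Sy r).card = r * (r - 1) := by
  obtain ⟨n, rfl⟩ : ∃ n, r = n + 1 := ⟨r - 1, by omega⟩
  rw [card_Sx, card_Sy]
  simpa using gauss_sum n

lemma finrank_W (r : ℕ) (hr : 3 ≤ r) : Module.finrank ℝ ↥(W r) = r * (r - 1) := by
  rw [← (phi r).finrank_eq, Module.finrank_prod, Module.finrank_pi, Module.finrank_pi,
    Fintype.card_coe, Fintype.card_coe, card_sum r hr]

/-! ### the interior point and the perturbation margin -/

variable (r : ℕ) (lam : ℕ → ℝ)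

def tD : ℝ := min (lam (r - 1) - lam r) (lam (r - 1) + lam r) / 2

def gD (j : ℕ) : ℝ := (lam j - lam (j + 1)) / 2

def deltaD : ℝ :=
  if h : (Finset.Icc 1 (r - 2)).Nonempty then
    min (tD r lam) ((Finset.Icc 1 (r - 2)).inf' h (gD lam))
  else tD r lam

def x0 (i j : ℕ) : ℝ := if 1 ≤ i ∧ i ≤ j ∧ j ≤ r then lam j else 0

def y0 (i j : ℕ) : ℝ :=
  if 1 ≤ i ∧ i ≤ j ∧ j ≤ r - 2 then (lam j + lam (j + 1)) / 2
  else if 1 ≤ i ∧ i ≤ j ∧ j = r - 1 then lam r + tD r lam else 0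

def p0 : (ℕ → ℕ → ℝ) × (ℕ → ℕ → ℝ) := (x0 r lam, y0 r lam)

lemma x0_eq {i j : ℕ} (h : 1 ≤ i ∧ i ≤ j ∧ j ≤ r) : x0 r lam i j = lam j := if_pos h

lemma x0_eq0 {i j : ℕ} (h : ¬(1 ≤ i ∧ i ≤ j ∧ j ≤ r)) : x0 r lam i j = 0 := if_neg h

lemma y0_eq_mid {i j : ℕ} (h : 1 ≤ i ∧ i ≤ j ∧ j ≤ r - 2) :
    y0 r lam i j = (lam j + lam (j + 1)) / 2 := if_pos h

lemma y0_eq_last {i j : ℕ} (h1 : ¬(1 ≤ i ∧ i ≤ j ∧ j ≤ r - 2))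
    (h2 : 1 ≤ i ∧ i ≤ j ∧ j = r - 1) : y0 r lam i j = lam r + tD r lam :=
  (if_neg h1).trans (if_pos h2)

lemma y0_eq0 {i j : ℕ} (h1 : ¬(1 ≤ i ∧ i ≤ j ∧ j ≤ r - 2))
    (h2 : ¬(1 ≤ i ∧ i ≤ j ∧ j = r - 1)) : y0 r lam i j = 0 :=
  (if_neg h1).trans (if_neg h2)

lemma two_tD_le_left : 2 * tD r lam ≤ lam (r - 1) - lam r := by
  have := min_le_left (lam (r - 1) - lam r) (lam (r - 1) + lam r)
  unfold tD; linarith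

lemma two_tD_le_right : 2 * tD r lam ≤ lam (r - 1) + lam r := by
  have := min_le_right (lam (r - 1) - lam r) (lam (r - 1) + lam r)
  unfold tD; linarith

lemma deltaD_le_tD : deltaD r lam ≤ tD r lam := by
  unfold deltaD
  split
  · exact min_le_left _ _
  · exact le_rfl

lemma deltaD_le_gD {j : ℕ} (h1 : 1 ≤ j) (h2 : j ≤ r - 2) : deltaD r lam ≤ gD lam j := by
  have hne : (Finset.Icc 1 (r - 2)).Nonempty := ⟨j, Finset.mem_Icc.2 ⟨h1, h2⟩⟩
  unfold deltaD
  rw [dif_pos hne]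
  exact (min_le_right _ _).trans (Finset.inf'_le _ (Finset.mem_Icc.2 ⟨h1, h2⟩))

section facts

variable {r : ℕ} {lam : ℕ → ℝ}
variable (hr : 3 ≤ r) (hdec : ∀ i, 1 ≤ i → i < r - 1 → lam (i + 1) < lam i)
  (habs : |lam r| < lam (r - 1))

include habs in
lemma tD_pos : 0 < tD r lam := by
  rw [abs_lt] at habs
  have h1 : 0 < lam (r - 1) - lam r := by linarith [habs.2]
  have h2 : 0 < lam (r - 1) + lam r := by linarith [habs.1]
  unfold tD
  have := lt_min h1 h2
  linarith

include hdec in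
lemma gD_pos {j : ℕ} (h1 : 1 ≤ j) (h2 : j ≤ r - 2) : 0 < gD lam j := by
  have := hdec j h1 (by omega)
  unfold gD; linarith

include hdec habs in
lemma deltaD_pos : 0 < deltaD r lam := by
  unfold deltaD
  split
  · refine lt_min (tD_pos habs) ?_
    rw [Finset.lt_inf'_iff]
    intro j hj
    rw [Finset.mem_Icc] at hj
    exact gD_pos hdec hj.1 hj.2
  · exact tD_pos habs

include hr hdec habs in
/-- Any pair coordinatewise within `deltaD` above `(x0, y0)` satisfies the BZ inequalities. -/
lemma isBZD_of_close (x y : ℕ → ℕ → ℝ)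
    (hx : ∀ i j, x0 r lam i j ≤ x i j ∧ x i j ≤ x0 r lam i j + deltaD r lam)
    (hy : ∀ i j, y0 r lam i j ≤ y i j ∧ y i j ≤ y0 r lam i j + deltaD r lam) :
    IsBZD r x y := by
  have hδt : deltaD r lam ≤ tD r lam := deltaD_le_tD r lam
  have htl := two_tD_le_left r lam
  have htr := two_tD_le_right r lam
  have hδpos := deltaD_pos hdec habs
  have key_y_le : ∀ i j, 1 ≤ i → i ≤ j → j + 1 ≤ r → ∀ z, x0 r lam i j ≤ z →
      y i j ≤ z := by
    intro i j h1 h2 h3 z hz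
    have hyij := (hy i j).2
    rw [x0_eq r lam ⟨h1, h2, by omega⟩] at hz
    by_cases hj : j ≤ r - 2
    · rw [y0_eq_mid r lam ⟨h1, h2, hj⟩] at hyij
      have hg := deltaD_le_gD r lam (by omega) hj
      unfold gD at hg
      linarith
    · have hjr : j = r - 1 := by omega
      rw [y0_eq_last r lam (by omega) ⟨h1, h2, hjr⟩] at hyij
      rw [hjr] at hz
      linarith
  refine ⟨?_, ?_, ?_, ?_, ?_⟩
  · intro i j h1 h2 h3
    exact key_y_le i j h1 h2 h3 _ (hx i j).1
  · intro i j h1 h2 h3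
    have hthis := (hx (i + 1) j).1
    rw [x0_eq r lam ⟨by omega, by omega, by omega⟩] at hthis
    refine key_y_le i j h1 (le_of_lt h2) h3 _ ?_
    rw [x0_eq r lam ⟨h1, le_of_lt h2, by omega⟩]
    exact hthis
  · intro i j h1 h2 h3
    have hyij := (hy i j).1
    have hx1 := (hx i (j + 1)).2
    have hx2 := (hx (i + 1) (j + 1)).2
    rw [x0_eq r lam ⟨h1, by omega, by omega⟩] at hx1
    rw [x0_eq r lam ⟨by omega, by omega, by omega⟩] at hx2
    by_cases hj : j ≤ r - 2
    · rw [y0_eq_mid r lam ⟨h1, h2, hj⟩] at hyij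
      have hg := deltaD_le_gD r lam (by omega) hj
      unfold gD at hg
      constructor <;> linarith
    · have hjr : j + 1 = r := by omega
      rw [y0_eq_last r lam (by omega) ⟨h1, h2, by omega⟩] at hyij
      have hl : lam (j + 1) = lam r := by rw [hjr]
      constructor <;> linarith
  · intro i h1 h2
    have hyij := (hy i (r - 1)).2
    rw [y0_eq_last r lam (by omega) ⟨h1, by omega, rfl⟩] at hyij
    have hx1 := (hx i r).1
    have hx2 := (hx (i + 1) r).1
    have hx3 := (hx i (r - 1)).1
    have hx4 := (hx (i + 1) (r - 1)).1
    rw [x0_eq r lam ⟨h1, by omega, le_rfl⟩] at hx1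
    rw [x0_eq r lam ⟨by omega, by omega, le_rfl⟩] at hx2
    rw [x0_eq r lam ⟨h1, by omega, by omega⟩] at hx3
    rw [x0_eq r lam ⟨by omega, by omega, by omega⟩] at hx4
    have hmin : lam (r - 1) ≤ min (x i (r - 1)) (x (i + 1) (r - 1)) := le_min hx3 hx4
    linarith
  · have hyij := (hy (r - 1) (r - 1)).2
    rw [y0_eq_last r lam (by omega) ⟨by omega, le_rfl, rfl⟩] at hyij
    have hx1 := (hx (r - 1) r).1
    have hx2 := (hx r r).1
    have hx3 := (hx (r - 1) (r - 1)).1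
    rw [x0_eq r lam ⟨by omega, by omega, le_rfl⟩] at hx1
    rw [x0_eq r lam ⟨by omega, le_rfl, le_rfl⟩] at hx2
    rw [x0_eq r lam ⟨by omega, le_rfl, by omega⟩] at hx3
    linarith

include hr hdec habs in
lemma p0_mem : p0 r lam ∈ BZsetD r lam := by
  have hδpos := deltaD_pos hdec habs
  refine ⟨?_, ?_, ?_, ?_⟩
  · intro j h1 h2
    exact x0_eq r lam ⟨le_rfl, h1, h2⟩
  · show IsBZD r (x0 r lam) (y0 r lam)
    exact isBZD_of_close hr hdec habs _ _
      (fun i j => ⟨le_rfl, by linarith⟩) (fun i j => ⟨le_rfl, by linarith⟩)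
  · intro i j h
    exact x0_eq0 r lam h
  · intro i j h
    exact y0_eq0 r lam (by omega) (by omega)

include hr hdec habs in
lemma perturb_x_mem {i0 j0 : ℕ} (h0 : 2 ≤ i0 ∧ i0 ≤ j0 ∧ j0 ≤ r) :
    p0 r lam + deltaD r lam • ex i0 j0 ∈ BZsetD r lam := by
  have hδpos := deltaD_pos hdec habs
  have hfst : ∀ i j, (p0 r lam + deltaD r lam • ex i0 j0).1 i j
      = x0 r lam i j + deltaD r lam * (if i = i0 ∧ j = j0 then 1 else 0) := by
    intro i j; simp [p0, ex]
  have hsnd : ∀ i j, (p0 r lam + deltaD r lam • ex i0 j0).2 i j = y0 r lam i j := by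
    intro i j; simp [p0, ex]
  refine ⟨?_, ?_, ?_, ?_⟩
  · intro j h1 h2
    rw [hfst, if_neg (by omega), x0_eq r lam ⟨le_rfl, h1, h2⟩]
    ring
  · refine isBZD_of_close hr hdec habs _ _ (fun i j => ?_) (fun i j => ?_)
    · rw [hfst]
      split
      · constructor <;> linarith
      · constructor <;> linarith
    · rw [hsnd]
      exact ⟨le_rfl, by linarith⟩
  · intro i j h
    rw [hfst, if_neg (by rintro ⟨rfl, rfl⟩; exact h (by omega)), x0_eq0 r lam h]
    ring
  · intro i j h
    rw [hsnd]
    exact y0_eq0 r lam (by omega) (by omega)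

include hr hdec habs in
lemma perturb_y_mem {i0 j0 : ℕ} (h0 : 1 ≤ i0 ∧ i0 ≤ j0 ∧ j0 ≤ r - 1) :
    p0 r lam + deltaD r lam • ey i0 j0 ∈ BZsetD r lam := by
  have hδpos := deltaD_pos hdec habs
  have hfst : ∀ i j, (p0 r lam + deltaD r lam • ey i0 j0).1 i j = x0 r lam i j := by
    intro i j; simp [p0, ey]
  have hsnd : ∀ i j, (p0 r lam + deltaD r lam • ey i0 j0).2 i j
      = y0 r lam i j + deltaD r lam * (if i = i0 ∧ j = j0 then 1 else 0) := by
    intro i j; simp [p0, ey]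
  refine ⟨?_, ?_, ?_, ?_⟩
  · intro j h1 h2
    rw [hfst]
    exact x0_eq r lam ⟨le_rfl, h1, h2⟩
  · refine isBZD_of_close hr hdec habs _ _ (fun i j => ?_) (fun i j => ?_)
    · rw [hfst]
      exact ⟨le_rfl, by linarith⟩
    · rw [hsnd]
      split
      · constructor <;> linarith
      · constructor <;> linarith
  · intro i j h
    rw [hfst]
    exact x0_eq0 r lam h
  · intro i j h
    rw [hsnd, if_neg (by rintro ⟨rfl, rfl⟩; exact h (by omega)),
      y0_eq0 r lam (by omega) (by omega)]
    ring

end facts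

/-- every element of `W r` is a linear combination of the coordinate vectors -/
lemma decomp {r : ℕ} (v : (ℕ → ℕ → ℝ) × (ℕ → ℕ → ℝ)) (hv : v ∈ W r) :
    v = (∑ c ∈ Sx r, v.1 c.2 c.1 • ex c.2 c.1) + ∑ c ∈ Sy r, v.2 c.2 c.1 • ey c.2 c.1 := by
  refine Prod.ext ?_ ?_ <;> funext a b
  · rw [Prod.fst_add, Prod.fst_sum, Prod.fst_sum]
    simp only [Pi.add_apply, Finset.sum_apply]
    have h2 : ∀ c ∈ Sy r, (((v.2 c.2 c.1 • ey c.2 c.1).1 : ℕ → ℕ → ℝ) a b) = 0 := by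
      intro c _; simp [ey]
    rw [Finset.sum_eq_zero h2, add_zero]
    have hterm : ∀ c : (_ : ℕ) × ℕ, ((v.1 c.2 c.1 • ex c.2 c.1).1 a b)
        = v.1 c.2 c.1 * (if a = c.2 ∧ b = c.1 then 1 else 0) := by
      intro c; simp [ex]
    by_cases h : (⟨b, a⟩ : (_ : ℕ) × ℕ) ∈ Sx r
    · rw [Finset.sum_eq_single_of_mem ⟨b, a⟩ h]
      · rw [hterm]; simp
      · intro c hc hne
        rw [hterm, if_neg, mul_zero]
        rintro ⟨rfl, rfl⟩
        exact hne rfl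
    · rw [Finset.sum_eq_zero, (mem_W.1 hv).1 a b (by rwa [mem_Sx] at h)]
      intro c hc
      rw [hterm, if_neg, mul_zero]
      rintro ⟨rfl, rfl⟩
      exact h hc
  · rw [Prod.snd_add, Prod.snd_sum, Prod.snd_sum]
    simp only [Pi.add_apply, Finset.sum_apply]
    have h2 : ∀ c ∈ Sx r, (((v.1 c.2 c.1 • ex c.2 c.1).2 : ℕ → ℕ → ℝ) a b) = 0 := by
      intro c _; simp [ex]
    rw [Finset.sum_eq_zero h2, zero_add]
    have hterm : ∀ c : (_ : ℕ) × ℕ, ((v.2 c.2 c.1 • ey c.2 c.1).2 a b)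
        = v.2 c.2 c.1 * (if a = c.2 ∧ b = c.1 then 1 else 0) := by
      intro c; simp [ey]
    by_cases h : (⟨b, a⟩ : (_ : ℕ) × ℕ) ∈ Sy r
    · rw [Finset.sum_eq_single_of_mem ⟨b, a⟩ h]
      · rw [hterm]; simp
      · intro c hc hne
        rw [hterm, if_neg, mul_zero]
        rintro ⟨rfl, rfl⟩
        exact hne rfl
    · rw [Finset.sum_eq_zero, (mem_W.1 hv).2 a b (by rwa [mem_Sy] at h)]
      intro c hc
      rw [hterm, if_neg, mul_zero]
      rintro ⟨rfl, rfl⟩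
      exact h hc

end BZAux

end BZAuxSec

/-- **Full-dimensionality of the type `D` BZ-polytope for strictly dominant `λ`.**
If `λ_1 > λ_2 > … > λ_{r−1} > |λ_r|`, then the type `D` BZ-polytope `BZ_λ` is
full-dimensional: its affine dimension equals `r(r−1)` (equivalently, it has nonempty
interior in `ℝ^{r(r−1)}`). -/
theorem BZ_polytope_D_full_dimensional
    (r : ℕ) (hr : 3 ≤ r) (lam : ℕ → ℝ)
    (hdec : ∀ i, 1 ≤ i → i < r - 1 → lam (i + 1) < lam i)
    (habs : |lam r| < lam (r - 1)) :
    affDim (BZsetD r lam) = r * (r - 1) := by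
  classical
  have hδpos := BZAux.deltaD_pos (r := r) (lam := lam) hdec habs
  have hδne : BZAux.deltaD r lam ≠ 0 := ne_of_gt hδpos
  have hle : vectorSpan ℝ (BZsetD r lam) ≤ BZAux.W r := by
    rw [vectorSpan_def, Submodule.span_le]
    rintro v hv
    obtain ⟨p, hp, q, hq, rfl⟩ := hv
    show p - q ∈ (BZAux.W r : Set _)
    rw [SetLike.mem_coe, BZAux.mem_W]
    constructor
    · intro i j h
      show p.1 i j - q.1 i j = 0
      by_cases hin : 1 ≤ i ∧ i ≤ j ∧ j ≤ r
      · have hi1 : i = 1 := by omega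
        subst hi1
        rw [hp.1 j hin.2.1 hin.2.2, hq.1 j hin.2.1 hin.2.2, sub_self]
      · rw [hp.2.2.1 i j hin, hq.2.2.1 i j hin, sub_self]
    · intro i j h
      show p.2 i j - q.2 i j = 0
      have h' : ¬(1 ≤ i ∧ i ≤ j ∧ j + 1 ≤ r) := by omega
      rw [hp.2.2.2 i j h', hq.2.2.2 i j h', sub_self]
  have hex : ∀ i0 j0, 2 ≤ i0 ∧ i0 ≤ j0 ∧ j0 ≤ r →
      BZAux.ex i0 j0 ∈ vectorSpan ℝ (BZsetD r lam) := by
    intro i0 j0 h0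
    have h1 := vsub_mem_vectorSpan ℝ
      (BZAux.perturb_x_mem hr hdec habs h0) (BZAux.p0_mem hr hdec habs)
    rw [vsub_eq_sub, add_sub_cancel_left] at h1
    have h2 := Submodule.smul_mem _ (BZAux.deltaD r lam)⁻¹ h1
    rwa [smul_smul, inv_mul_cancel₀ hδne, one_smul] at h2
  have hey : ∀ i0 j0, 1 ≤ i0 ∧ i0 ≤ j0 ∧ j0 ≤ r - 1 →
      BZAux.ey i0 j0 ∈ vectorSpan ℝ (BZsetD r lam) := by
    intro i0 j0 h0
    have h1 := vsub_mem_vectorSpan ℝ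
      (BZAux.perturb_y_mem hr hdec habs h0) (BZAux.p0_mem hr hdec habs)
    rw [vsub_eq_sub, add_sub_cancel_left] at h1
    have h2 := Submodule.smul_mem _ (BZAux.deltaD r lam)⁻¹ h1
    rwa [smul_smul, inv_mul_cancel₀ hδne, one_smul] at h2
  have hge : BZAux.W r ≤ vectorSpan ℝ (BZsetD r lam) := by
    intro v hv
    rw [BZAux.decomp v hv]
    refine Submodule.add_mem _ (Submodule.sum_mem _ fun c hc => ?_)
      (Submodule.sum_mem _ fun c hc => ?_)
    · exact Submodule.smul_mem _ _ (hex c.2 c.1 (BZAux.mem_Sx.1 hc))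
    · exact Submodule.smul_mem _ _ (hey c.2 c.1 (BZAux.mem_Sy.1 hc))
  have heq : vectorSpan ℝ (BZsetD r lam) = BZAux.W r := le_antisymm hle hge
  rw [affDim, heq]
  exact BZAux.finrank_W r hr
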